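/- Let Y be a Banach space, 1 < p < ∞, let 𝕏 be a Banach space and ι : 𝕏 → L^p([0,1];Y) a continuous linear map that is compact (i.e., ι maps bounded subsets of 𝕏 to relatively compact subsets of L^p([0,1];Y)). Let 𝒳 ⊆ 𝕏 be a bounded set. Then for every ε > 0 there exists N ∈ ℕ such that for all n ≥ N, sup_{x ∈ 𝒳} ‖𝔥ⁿ_s(ιx) − ιx‖_{L^p([0,1];Y)} ≤ ε. -/

import Mathlib

open MeasureTheory Set Filter
open scoped ENNReal NNReal

/-- The shifted Haar projection `𝔥ⁿ_s`: the step function which vanishes on `[0, 2⁻ⁿ]` and,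
for each `j = 1, …, 2ⁿ - 1`, equals on `(j·2⁻ⁿ, (j+1)·2⁻ⁿ]` the mean value of `x` over the
preceding dyadic interval `((j-1)·2⁻ⁿ, j·2⁻ⁿ]`. -/
noncomputable def shiftedHaar {Y : Type*} [NormedAddCommGroup Y] [NormedSpace ℝ Y]
    (n : ℕ) (x : ℝ → Y) : ℝ → Y := fun t =>
  ∑ j ∈ Finset.Ico 1 (2 ^ n : ℕ),
    Set.indicator (Set.Ioc ((j : ℝ) / 2 ^ n) (((j : ℝ) + 1) / 2 ^ n))
      (fun _ => (2 ^ n : ℝ) • ∫ r in Set.Ioc (((j : ℝ) - 1) / 2 ^ n) ((j : ℝ) / 2 ^ n), x r) t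

set_option linter.unusedSectionVars false

section Aux
open scoped Topology

variable {Y : Type*} [NormedAddCommGroup Y] [NormedSpace ℝ Y]

lemma I_subset {n j : ℕ} (hj : j ∈ Finset.Ico 1 (2 ^ n)) :
    Ioc (((j : ℝ) - 1) / 2 ^ n) ((j : ℝ) / 2 ^ n) ⊆ Ioc (0 : ℝ) 1 := by
  obtain ⟨h1, h2⟩ := Finset.mem_Ico.1 hj
  have hb : (0:ℝ) < 2 ^ n := by positivity
  have hj1 : (1:ℝ) ≤ (j:ℝ) := by exact_mod_cast h1
  have hj2 : (j:ℝ) ≤ 2 ^ n := by exact_mod_cast h2.le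
  apply Ioc_subset_Ioc
  · apply div_nonneg (by linarith) hb.le
  · rw [div_le_one hb]; exact hj2

lemma J_subset {n j : ℕ} (hj : j ∈ Finset.Ico 1 (2 ^ n)) :
    Ioc ((j : ℝ) / 2 ^ n) (((j : ℝ) + 1) / 2 ^ n) ⊆ Ioc (0 : ℝ) 1 := by
  obtain ⟨h1, h2⟩ := Finset.mem_Ico.1 hj
  have hb : (0:ℝ) < 2 ^ n := by positivity
  have hj1 : (1:ℝ) ≤ (j:ℝ) := by exact_mod_cast h1
  have hj2 : (j:ℝ) + 1 ≤ 2 ^ n := by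
    have : (j + 1 : ℕ) ≤ 2 ^ n := h2
    exact_mod_cast this
  apply Ioc_subset_Ioc
  · apply div_nonneg (by linarith) hb.le
  · rw [div_le_one hb]; exact hj2

lemma mem_J_unique {n i j : ℕ} {t : ℝ}
    (hi : t ∈ Ioc ((i : ℝ) / 2 ^ n) (((i : ℝ) + 1) / 2 ^ n))
    (hj : t ∈ Ioc ((j : ℝ) / 2 ^ n) (((j : ℝ) + 1) / 2 ^ n)) : i = j := by
  have hb : (0:ℝ) < 2 ^ n := by positivity
  have h1 : (i:ℝ) / 2 ^ n < ((j:ℝ) + 1) / 2 ^ n := lt_of_lt_of_le hi.1 hj.2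
  have h2 : (j:ℝ) / 2 ^ n < ((i:ℝ) + 1) / 2 ^ n := lt_of_lt_of_le hj.1 hi.2
  have h1' : (i:ℝ) < (j:ℝ) + 1 := by
    have := mul_lt_mul_of_pos_right h1 hb
    rwa [div_mul_cancel₀ _ hb.ne', div_mul_cancel₀ _ hb.ne'] at this
  have h2' : (j:ℝ) < (i:ℝ) + 1 := by
    have := mul_lt_mul_of_pos_right h2 hb
    rwa [div_mul_cancel₀ _ hb.ne', div_mul_cancel₀ _ hb.ne'] at this
  have : i < j + 1 := by exact_mod_cast h1'
  have : j < i + 1 := by exact_mod_cast h2'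
  omega

lemma exists_J {n : ℕ} {t : ℝ} (ht : t ∈ Ioc ((1 : ℝ) / 2 ^ n) 1) :
    ∃ j ∈ Finset.Ico 1 (2 ^ n : ℕ), t ∈ Ioc ((j : ℝ) / 2 ^ n) (((j : ℝ) + 1) / 2 ^ n) := by
  have hb : (0:ℝ) < 2 ^ n := by positivity
  set y := t * 2 ^ n with hy
  have hy1 : 1 < y := by
    have := ht.1
    rw [div_lt_iff₀ hb] at this
    linarith [this]
  have hy2 : y ≤ 2 ^ n := by
    have := ht.2
    calc y ≤ 1 * 2 ^ n := by nlinarith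
    _ = 2 ^ n := one_mul _
  set k := ⌈y⌉₊ with hk
  have hk2 : 2 ≤ k := by
    have : (1:ℕ) < ⌈y⌉₊ := Nat.lt_ceil.2 (by exact_mod_cast hy1)
    omega
  have hkle : k ≤ 2 ^ n := by
    apply Nat.ceil_le.2
    exact_mod_cast hy2
  refine ⟨k - 1, Finset.mem_Ico.2 ⟨by omega, by omega⟩, ?_⟩
  have hcast : ((k - 1 : ℕ) : ℝ) = (k : ℝ) - 1 := by
    have : 1 ≤ k := by omega
    push_cast [Nat.cast_sub this]; ring
  constructor
  · rw [div_lt_iff₀ hb, hcast]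
    have : (k:ℝ) < y + 1 := by
      have := Nat.ceil_lt_add_one (by linarith : (0:ℝ) ≤ y)
      exact_mod_cast this
    linarith
  · rw [le_div_iff₀ hb, hcast]
    have : y ≤ (k:ℝ) := Nat.le_ceil y
    linarith

lemma sH_eq_of_mem (n : ℕ) (f : ℝ → Y) {j : ℕ} (hj : j ∈ Finset.Ico 1 (2 ^ n))
    {t : ℝ} (ht : t ∈ Ioc ((j : ℝ) / 2 ^ n) (((j : ℝ) + 1) / 2 ^ n)) :
    shiftedHaar n f t = (2 ^ n : ℝ) • ∫ r in Ioc (((j : ℝ) - 1) / 2 ^ n) ((j : ℝ) / 2 ^ n), f r := by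
  unfold shiftedHaar
  rw [Finset.sum_eq_single_of_mem j hj]
  · exact Set.indicator_of_mem ht _
  · intro i _ hij
    exact Set.indicator_of_notMem (fun hti => hij (mem_J_unique hti ht)) _

lemma sH_eq_zero (n : ℕ) (f : ℝ → Y) {t : ℝ}
    (ht : ∀ j ∈ Finset.Ico 1 (2 ^ n : ℕ), t ∉ Ioc ((j : ℝ) / 2 ^ n) (((j : ℝ) + 1) / 2 ^ n)) :
    shiftedHaar n f t = 0 :=
  Finset.sum_eq_zero fun j hj => Set.indicator_of_notMem (ht j hj) _

lemma sH_stronglyMeasurable (n : ℕ) (f : ℝ → Y) :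
    StronglyMeasurable (shiftedHaar n f) := by
  unfold shiftedHaar
  apply Finset.stronglyMeasurable_fun_sum
  intro j _
  exact stronglyMeasurable_const.indicator measurableSet_Ioc

lemma sH_sub (n : ℕ) {f g : ℝ → Y}
    (hf : IntegrableOn f (Ioc (0:ℝ) 1) volume) (hg : IntegrableOn g (Ioc (0:ℝ) 1) volume)
    (t : ℝ) :
    shiftedHaar n (fun r => f r - g r) t = shiftedHaar n f t - shiftedHaar n g t := by
  unfold shiftedHaar
  rw [← Finset.sum_sub_distrib]
  refine Finset.sum_congr rfl fun j hj => ?_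
  by_cases ht : t ∈ Ioc ((j:ℝ) / 2 ^ n) (((j:ℝ) + 1) / 2 ^ n)
  · rw [Set.indicator_of_mem ht, Set.indicator_of_mem ht, Set.indicator_of_mem ht,
      integral_sub (hf.mono_set (I_subset hj)) (hg.mono_set (I_subset hj)), smul_sub]
  · rw [Set.indicator_of_notMem ht, Set.indicator_of_notMem ht, Set.indicator_of_notMem ht,
      sub_zero]


variable {Y : Type*} [NormedAddCommGroup Y] [NormedSpace ℝ Y] [CompleteSpace Y]

lemma I_disjoint {n : ℕ} : (↑(Finset.Ico 1 (2 ^ n : ℕ)) : Set ℕ).PairwiseDisjoint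
    (fun j : ℕ => Ioc (((j : ℝ) - 1) / 2 ^ n) ((j : ℝ) / 2 ^ n)) := by
  have hb : (0:ℝ) < 2 ^ n := by positivity
  have key : ∀ i j : ℕ, i < j →
      min ((i:ℝ)/2^n) ((j:ℝ)/2^n) ≤ max (((i:ℝ)-1)/2^n) (((j:ℝ)-1)/2^n) := by
    intro i j h
    have h1 : (i:ℝ) ≤ (j:ℝ) - 1 := by
      have : (i:ℝ) + 1 ≤ (j:ℝ) := by exact_mod_cast h
      linarith
    calc min ((i:ℝ)/2^n) ((j:ℝ)/2^n) ≤ (i:ℝ)/2^n := min_le_left _ _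
      _ ≤ ((j:ℝ)-1)/2^n := by gcongr
      _ ≤ max (((i:ℝ)-1)/2^n) (((j:ℝ)-1)/2^n) := le_max_right _ _
  intro i _ j _ hij
  simp only [Function.onFun]
  rw [Set.Ioc_disjoint_Ioc]
  rcases lt_or_gt_of_ne hij with h | h
  · exact key i j h
  · rw [min_comm, max_comm]; exact key j i h

lemma eLpNorm_sH_le {p : ℝ} (hp : 1 < p) (n : ℕ) {f : ℝ → Y}
    (hf : AEStronglyMeasurable f (volume.restrict (Ioc (0:ℝ) 1))) :
    eLpNorm (shiftedHaar n f) (ENNReal.ofReal p) (volume.restrict (Ioc (0:ℝ) 1)) ≤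
      eLpNorm f (ENNReal.ofReal p) (volume.restrict (Ioc (0:ℝ) 1)) := by
  have hp0 : (0:ℝ) < p := by linarith
  have hb : (0:ℝ) < 2 ^ n := by positivity
  have hq0 : ENNReal.ofReal p ≠ 0 := by simp [ENNReal.ofReal_eq_zero]; linarith
  have hqt : ENNReal.ofReal p ≠ ⊤ := ENNReal.ofReal_ne_top
  have hqr : (ENNReal.ofReal p).toReal = p := ENNReal.toReal_ofReal hp0.le
  set μ := volume.restrict (Ioc (0:ℝ) 1) with hμ
  -- abbreviations
  set c : ℕ → Y := fun j => (2 ^ n : ℝ) • ∫ r in Ioc (((j : ℝ) - 1) / 2 ^ n) ((j : ℝ) / 2 ^ n), f r with hc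
  rw [eLpNorm_eq_lintegral_rpow_enorm_toReal hq0 hqt, eLpNorm_eq_lintegral_rpow_enorm_toReal hq0 hqt, hqr]
  apply ENNReal.rpow_le_rpow _ (by positivity)
  -- pointwise rewriting of the left integrand
  have key : ∀ t : ℝ, (‖shiftedHaar n f t‖₊ : ℝ≥0∞) ^ p =
      ∑ j ∈ Finset.Ico 1 (2 ^ n : ℕ),
        (Ioc ((j : ℝ) / 2 ^ n) (((j : ℝ) + 1) / 2 ^ n)).indicator
          (fun _ => (‖c j‖₊ : ℝ≥0∞) ^ p) t := by
    intro t
    by_cases h : ∃ j ∈ Finset.Ico 1 (2 ^ n : ℕ), t ∈ Ioc ((j : ℝ) / 2 ^ n) (((j : ℝ) + 1) / 2 ^ n)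
    · obtain ⟨j, hj, htj⟩ := h
      rw [sH_eq_of_mem n f hj htj, Finset.sum_eq_single_of_mem j hj]
      · rw [Set.indicator_of_mem htj]
      · intro i _ hij
        exact Set.indicator_of_notMem (fun hti => hij (mem_J_unique hti htj)) _
    · push_neg at h
      rw [sH_eq_zero n f h, Finset.sum_eq_zero]
      · simp [ENNReal.zero_rpow_of_pos hp0]
      · intro i hi
        exact Set.indicator_of_notMem (h i hi) _
  calc ∫⁻ t, (‖shiftedHaar n f t‖₊ : ℝ≥0∞) ^ p ∂μ
      = ∫⁻ t, ∑ j ∈ Finset.Ico 1 (2 ^ n : ℕ),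
          (Ioc ((j : ℝ) / 2 ^ n) (((j : ℝ) + 1) / 2 ^ n)).indicator
            (fun _ => (‖c j‖₊ : ℝ≥0∞) ^ p) t ∂μ := lintegral_congr key
    _ = ∑ j ∈ Finset.Ico 1 (2 ^ n : ℕ), ∫⁻ t,
          (Ioc ((j : ℝ) / 2 ^ n) (((j : ℝ) + 1) / 2 ^ n)).indicator
            (fun _ => (‖c j‖₊ : ℝ≥0∞) ^ p) t ∂μ :=
        lintegral_finset_sum _ (fun j _ => measurable_const.indicator measurableSet_Ioc)
    _ = ∑ j ∈ Finset.Ico 1 (2 ^ n : ℕ), (‖c j‖₊ : ℝ≥0∞) ^ p * ENNReal.ofReal (1 / 2 ^ n) := by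
        refine Finset.sum_congr rfl fun j hj => ?_
        rw [lintegral_indicator measurableSet_Ioc, setLIntegral_const]
        congr 1
        rw [hμ, Measure.restrict_apply measurableSet_Ioc,
          inter_eq_self_of_subset_left (J_subset hj), Real.volume_Ioc,
          show ((j:ℝ) + 1)/2^n - (j:ℝ)/2^n = 1/2^n by ring]
    _ ≤ ∑ j ∈ Finset.Ico 1 (2 ^ n : ℕ),
          ∫⁻ t in Ioc (((j : ℝ) - 1) / 2 ^ n) ((j : ℝ) / 2 ^ n), (‖f t‖₊ : ℝ≥0∞) ^ p ∂volume := by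
        refine Finset.sum_le_sum fun j hj => ?_
        -- Hölder on the interval I j
        set I := Ioc (((j : ℝ) - 1) / 2 ^ n) ((j : ℝ) / 2 ^ n) with hI
        have hIsub : I ⊆ Ioc (0:ℝ) 1 := I_subset hj
        have hIμ : volume.restrict I = μ.restrict I := by
          rw [hμ, Measure.restrict_restrict measurableSet_Ioc,
            inter_eq_self_of_subset_left hIsub]
        have hvolI : volume I = ENNReal.ofReal (1 / 2 ^ n) := by
          rw [hI, Real.volume_Ioc, show (j:ℝ)/2^n - ((j:ℝ) - 1)/2^n = 1/2^n by ring]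
        have hfI : AEStronglyMeasurable f (volume.restrict I) := by
          rw [hIμ]; exact hf.restrict
        set A := ∫⁻ t in I, (‖f t‖₊ : ℝ≥0∞) ^ p ∂volume with hA
        set b := ENNReal.ofReal (1 / 2 ^ n) with hbb
        have hb0 : b ≠ 0 := by
          rw [hbb, ne_eq, ENNReal.ofReal_eq_zero, not_le]
          positivity
        have hbt : b ≠ ⊤ := ENNReal.ofReal_ne_top
        have hpq : p.HolderConjugate (p / (p - 1)) := Real.HolderConjugate.conjExponent hp
        have h1 : (‖c j‖₊ : ℝ≥0∞) ≤ ENNReal.ofReal (2 ^ n) * ∫⁻ r in I, (‖f r‖₊ : ℝ≥0∞) ∂volume := by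
          rw [hc]
          simp only [nnnorm_smul]
          push_cast
          rw [← enorm_eq_nnnorm, Real.enorm_eq_ofReal hb.le]
          exact mul_le_mul_right (enorm_integral_le_lintegral_enorm _) _
        have h2 : ∫⁻ r in I, (‖f r‖₊ : ℝ≥0∞) ∂volume ≤ A ^ (1/p) * b ^ (1 - 1/p) := by
          have := ENNReal.lintegral_mul_le_Lp_mul_Lq (volume.restrict I) hpq
            hfI.enorm aemeasurable_const (g := fun _ => (1:ℝ≥0∞))
          simp only [Pi.mul_apply, mul_one, one_mul, ENNReal.one_rpow, lintegral_const,
            Measure.restrict_apply MeasurableSet.univ, univ_inter] at this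
          rw [hvolI] at this
          have hexp : 1/(p/(p-1)) = 1 - 1/p := by
            rw [one_div, inv_div]
            field_simp
          rwa [hexp] at this
        have hX : ENNReal.ofReal (2 ^ n) * b = 1 := by
          rw [hbb, ← ENNReal.ofReal_mul hb.le, mul_one_div_cancel hb.ne', ENNReal.ofReal_one]
        calc (‖c j‖₊ : ℝ≥0∞) ^ p * b
            ≤ (ENNReal.ofReal (2 ^ n) * (A ^ (1/p) * b ^ (1 - 1/p))) ^ p * b := by
              exact mul_le_mul_left
                (ENNReal.rpow_le_rpow (h1.trans (mul_le_mul_right h2 _)) hp0.le) b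
          _ = (ENNReal.ofReal (2 ^ n)) ^ p * ((A ^ (1/p)) ^ p * ((b ^ (1 - 1/p)) ^ p * b)) := by
              rw [ENNReal.mul_rpow_of_nonneg _ _ hp0.le, ENNReal.mul_rpow_of_nonneg _ _ hp0.le]
              ring
          _ = (ENNReal.ofReal (2 ^ n)) ^ p * (A * (b ^ ((1 - 1/p) * p) * b ^ (1:ℝ))) := by
              rw [← ENNReal.rpow_mul A, one_div_mul_cancel hp0.ne', ENNReal.rpow_one,
                ← ENNReal.rpow_mul b, ENNReal.rpow_one]
          _ = (ENNReal.ofReal (2 ^ n)) ^ p * (A * b ^ ((1 - 1/p) * p + 1)) := by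
              rw [ENNReal.rpow_add _ _ hb0 hbt]
          _ = (ENNReal.ofReal (2 ^ n)) ^ p * (A * b ^ p) := by
              rw [show (1 - 1/p) * p + 1 = p by field_simp; ring]
          _ = A * (ENNReal.ofReal (2 ^ n) * b) ^ p := by
              rw [ENNReal.mul_rpow_of_nonneg _ _ hp0.le]; ring
          _ = A := by rw [hX, ENNReal.one_rpow, mul_one]
    _ ≤ ∫⁻ t, (‖f t‖₊ : ℝ≥0∞) ^ p ∂μ := by
        rw [← lintegral_biUnion_finset I_disjoint (fun j _ => measurableSet_Ioc)]
        rw [hμ]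
        exact lintegral_mono_set (iUnion₂_subset fun j hj => I_subset hj)


variable {Y : Type*} [NormedAddCommGroup Y] [NormedSpace ℝ Y] [CompleteSpace Y]

lemma sH_continuous {p : ℝ} (hp : 1 < p) {h : ℝ → Y} (hc : Continuous h)
    {δ : ℝ} (hδ : 0 < δ) :
    ∃ N : ℕ, ∀ n ≥ N,
      eLpNorm (fun t => shiftedHaar n h t - h t) (ENNReal.ofReal p)
        (volume.restrict (Ioc (0:ℝ) 1)) ≤ ENNReal.ofReal δ := by
  have hp0 : (0:ℝ) < p := by linarith
  set μ := volume.restrict (Ioc (0:ℝ) 1) with hμ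
  have hqr : (ENNReal.ofReal p).toReal = p := ENNReal.toReal_ofReal hp0.le
  -- bound on [0,1]
  obtain ⟨C, hC⟩ := isCompact_Icc.exists_bound_of_continuousOn (s := Icc (0:ℝ) 1) hc.continuousOn
  set M := max C 0 with hM
  have hM0 : 0 ≤ M := le_max_right _ _
  have hMb : ∀ t ∈ Icc (0:ℝ) 1, ‖h t‖ ≤ M := fun t ht => (hC t ht).trans (le_max_left _ _)
  -- uniform continuity on [0,1]
  have huc := isCompact_Icc.uniformContinuousOn_of_continuous (s := Icc (0:ℝ) 1) hc.continuousOn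
  obtain ⟨δ₀, hδ₀, hucd⟩ := Metric.uniformContinuousOn_iff.1 huc (δ/2) (by positivity)
  -- choice of N
  have htend1 : Tendsto (fun n : ℕ => (2:ℝ) * (1/2)^n) atTop (𝓝 0) := by
    have := (tendsto_pow_atTop_nhds_zero_of_lt_one (by norm_num : (0:ℝ) ≤ 1/2)
      (by norm_num)).const_mul (2:ℝ)
    simpa using this
  have hr : (0:ℝ) ≤ (1/2 : ℝ) ^ (1/p) := Real.rpow_nonneg (by norm_num) _
  have hr1 : ((1/2 : ℝ)) ^ (1/p) < 1 :=
    Real.rpow_lt_one (by norm_num) (by norm_num) (by positivity)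
  have htend2 : Tendsto (fun n : ℕ => M * (((1/2:ℝ)) ^ (1/p))^n) atTop (𝓝 0) := by
    have := (tendsto_pow_atTop_nhds_zero_of_lt_one hr hr1).const_mul M
    simpa using this
  have hev : ∀ᶠ n : ℕ in atTop, (2:ℝ) * (1/2)^n < δ₀ ∧ M * (((1/2:ℝ)) ^ (1/p))^n < δ/2 :=
    (htend1.eventually_lt_const hδ₀).and (htend2.eventually_lt_const (by positivity))
  obtain ⟨N, hN⟩ := eventually_atTop.1 hev
  refine ⟨N, fun n hn => ?_⟩
  obtain ⟨hn1, hn2⟩ := hN n hn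
  have hb : (0:ℝ) < 2 ^ n := by positivity
  have h2n : (1:ℝ)/2^n ≤ 1 := by
    rw [div_le_one hb]
    exact one_le_pow₀ (by norm_num)
  -- pointwise bound on (1/2^n, 1]
  have hptw : ∀ t ∈ Ioc ((1:ℝ)/2^n) 1, ‖shiftedHaar n h t - h t‖ ≤ δ/2 := by
    intro t ht
    obtain ⟨j, hj, htj⟩ := exists_J ht
    rw [sH_eq_of_mem n h hj htj]
    set I := Ioc (((j : ℝ) - 1) / 2 ^ n) ((j : ℝ) / 2 ^ n) with hI
    have hIvol : (volume I).toReal = 1/2^n := by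
      rw [hI, Real.volume_Ioc, show (j:ℝ)/2^n - ((j:ℝ) - 1)/2^n = 1/2^n by ring,
        ENNReal.toReal_ofReal (by positivity)]
    have hint : IntegrableOn h I volume := hc.integrableOn_Ioc
    have heq : (2 ^ n : ℝ) • (∫ r in I, h r) - h t
        = (2 ^ n : ℝ) • ∫ r in I, (h r - h t) := by
      rw [integral_sub hint (integrableOn_const (by
        rw [hI, Real.volume_Ioc]; exact ENNReal.ofReal_ne_top)),
        setIntegral_const, smul_sub, measureReal_def, hIvol, smul_smul,
        mul_one_div_cancel hb.ne', one_smul]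
    rw [heq, norm_smul, Real.norm_eq_abs, abs_of_pos hb]
    have hbound : ∀ r ∈ I, ‖h r - h t‖ ≤ δ/2 := by
      intro r hr
      have hrI : r ∈ Ioc (0:ℝ) 1 := I_subset hj hr
      have htI : t ∈ Ioc (0:ℝ) 1 := J_subset hj htj
      have hdist : dist r t < δ₀ := by
        rw [Real.dist_eq, abs_lt]
        have e1 : ((j:ℝ) - 1)/2^n < r := hr.1
        have e2 : r ≤ (j:ℝ)/2^n := hr.2
        have e3 : (j:ℝ)/2^n < t := htj.1
        have e4 : t ≤ ((j:ℝ) + 1)/2^n := htj.2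
        have key : ((j:ℝ)+1)/2^n - ((j:ℝ)-1)/2^n = 2 * (1/2)^n := by
          rw [div_pow, one_pow]; ring
        constructor <;> nlinarith [hn1]
      have := hucd r (Ioc_subset_Icc_self hrI) t (Ioc_subset_Icc_self htI) hdist
      rw [dist_eq_norm] at this
      exact this.le
    calc (2:ℝ)^n * ‖∫ r in I, (h r - h t)‖ ≤ (2:ℝ)^n * (δ/2 * (volume I).toReal) := by
          gcongr
          exact norm_setIntegral_le_of_norm_le_const
            (by rw [hI, Real.volume_Ioc]; exact ENNReal.ofReal_lt_top) hbound
      _ = δ/2 := by rw [hIvol]; field_simp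
  -- decompose
  have hdecomp : ∀ᵐ t ∂μ, (fun t => shiftedHaar n h t - h t) t =
      ((Ioc ((1:ℝ)/2^n) 1).indicator (fun t => shiftedHaar n h t - h t)
        + (Ioc (0:ℝ) ((1:ℝ)/2^n)).indicator (fun t => shiftedHaar n h t - h t)) t := by
    filter_upwards [ae_restrict_mem measurableSet_Ioc] with t ht
    simp only [Pi.add_apply]
    by_cases hcase : t ≤ 1/2^n
    · rw [Set.indicator_of_notMem (fun hmem => absurd hmem.1 (not_lt.2 hcase)),
        Set.indicator_of_mem (Set.mem_Ioc.mpr ⟨ht.1, hcase⟩) _, zero_add]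
    · rw [Set.indicator_of_mem (Set.mem_Ioc.mpr ⟨not_le.1 hcase, ht.2⟩) _,
        Set.indicator_of_notMem (fun hmem => absurd hmem.2 hcase), add_zero]
  have hsm : AEStronglyMeasurable (fun t => shiftedHaar n h t - h t) μ :=
    ((sH_stronglyMeasurable n h).sub hc.stronglyMeasurable).aestronglyMeasurable
  rw [eLpNorm_congr_ae hdecomp]
  have hle := eLpNorm_add_le
    (f := (Ioc ((1:ℝ)/2^n) 1).indicator fun t => shiftedHaar n h t - h t)
    (g := (Ioc (0:ℝ) ((1:ℝ)/2^n)).indicator fun t => shiftedHaar n h t - h t)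
    ((hsm.indicator measurableSet_Ioc)) ((hsm.indicator measurableSet_Ioc))
    (ENNReal.one_le_ofReal.2 hp.le) (μ := μ)
  refine hle.trans ?_
  have hbd1 : eLpNorm ((Ioc ((1:ℝ)/2^n) 1).indicator fun t => shiftedHaar n h t - h t)
      (ENNReal.ofReal p) μ ≤ ENNReal.ofReal (δ/2) := by
    have hab : ∀ᵐ t ∂μ, ‖((Ioc ((1:ℝ)/2^n) 1).indicator fun t => shiftedHaar n h t - h t) t‖
        ≤ δ/2 := by
      apply ae_of_all
      intro t
      by_cases hmem : t ∈ Ioc ((1:ℝ)/2^n) 1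
      · rw [Set.indicator_of_mem hmem]; exact hptw t hmem
      · rw [Set.indicator_of_notMem hmem]; simp; positivity
    have := eLpNorm_le_of_ae_bound hab (p := ENNReal.ofReal p) (μ := μ)
    have hμuniv : μ univ = 1 := by
      rw [hμ, Measure.restrict_apply_univ, Real.volume_Ioc]
      norm_num
    rwa [hμuniv, ENNReal.one_rpow, one_mul] at this
  have hbd2 : eLpNorm ((Ioc (0:ℝ) ((1:ℝ)/2^n)).indicator fun t => shiftedHaar n h t - h t)
      (ENNReal.ofReal p) μ ≤ ENNReal.ofReal (δ/2) := by
    rw [eLpNorm_indicator_eq_eLpNorm_restrict measurableSet_Ioc]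
    have hsub : Ioc (0:ℝ) ((1:ℝ)/2^n) ⊆ Ioc (0:ℝ) 1 := Ioc_subset_Ioc le_rfl h2n
    have hres : μ.restrict (Ioc (0:ℝ) ((1:ℝ)/2^n)) = volume.restrict (Ioc (0:ℝ) ((1:ℝ)/2^n)) := by
      rw [hμ, Measure.restrict_restrict measurableSet_Ioc, inter_eq_self_of_subset_left hsub]
    rw [hres]
    have hab : ∀ᵐ t ∂(volume.restrict (Ioc (0:ℝ) ((1:ℝ)/2^n))),
        ‖shiftedHaar n h t - h t‖ ≤ M := by
      filter_upwards [ae_restrict_mem measurableSet_Ioc] with t ht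
      have hz : shiftedHaar n h t = 0 := by
        apply sH_eq_zero
        intro j hj hmem
        have hj1 : (1:ℝ) ≤ (j:ℝ) := by exact_mod_cast (Finset.mem_Ico.1 hj).1
        have : (1:ℝ)/2^n ≤ (j:ℝ)/2^n := by gcongr
        exact absurd (lt_of_le_of_lt this hmem.1) (not_lt.2 ht.2)
      rw [hz, zero_sub, norm_neg]
      exact hMb t ⟨ht.1.le, ht.2.trans h2n⟩
    have := eLpNorm_le_of_ae_bound hab (p := ENNReal.ofReal p)
    refine this.trans ?_
    have hμs : (volume.restrict (Ioc (0:ℝ) ((1:ℝ)/2^n))) univ = ENNReal.ofReal (1/2^n) := by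
      rw [Measure.restrict_apply_univ, Real.volume_Ioc, sub_zero]
    rw [hμs, hqr]
    have : (ENNReal.ofReal (1/2^n)) ^ p⁻¹ * ENNReal.ofReal M
        = ENNReal.ofReal (M * ((1/2:ℝ) ^ (1/p))^n) := by
      rw [ENNReal.ofReal_rpow_of_pos (by positivity), ← ENNReal.ofReal_mul (by positivity),
        mul_comm]
      congr 2
      rw [show (1:ℝ)/2^n = ((1/2:ℝ))^n from by rw [div_pow, one_pow],
        ← Real.rpow_natCast ((1/2:ℝ)) n, ← Real.rpow_mul (by norm_num),
        ← Real.rpow_natCast ((1/2:ℝ) ^ (1/p)) n, ← Real.rpow_mul (by norm_num),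
        one_div, mul_comm]
      norm_num
    rw [this]
    exact ENNReal.ofReal_le_ofReal hn2.le
  calc eLpNorm _ (ENNReal.ofReal p) μ + eLpNorm _ (ENNReal.ofReal p) μ
      ≤ ENNReal.ofReal (δ/2) + ENNReal.ofReal (δ/2) := add_le_add hbd1 hbd2
    _ = ENNReal.ofReal δ := by
        rw [← ENNReal.ofReal_add (by positivity) (by positivity)]
        norm_num


variable {Y : Type*} [NormedAddCommGroup Y] [NormedSpace ℝ Y] [CompleteSpace Y]

lemma sH_memLp {p : ℝ} (hp : 1 < p) {f : ℝ → Y}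
    (hf : MemLp f (ENNReal.ofReal p) (volume.restrict (Ioc (0:ℝ) 1)))
    {δ : ℝ} (hδ : 0 < δ) :
    ∃ N : ℕ, ∀ n ≥ N,
      eLpNorm (fun t => shiftedHaar n f t - f t) (ENNReal.ofReal p)
        (volume.restrict (Ioc (0:ℝ) 1)) ≤ ENNReal.ofReal δ := by
  set μ := volume.restrict (Ioc (0:ℝ) 1) with hμ
  haveI : IsFiniteMeasure μ := ⟨by rw [hμ, Measure.restrict_apply_univ, Real.volume_Ioc]; simp⟩
  have hq1 : (1:ℝ≥0∞) ≤ ENNReal.ofReal p := ENNReal.one_le_ofReal.2 hp.le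
  -- density
  obtain ⟨g, hg, hgmem⟩ := hf.exists_boundedContinuous_eLpNorm_sub_le ENNReal.ofReal_ne_top
    (ε := ENNReal.ofReal (δ/3)) (by simp [ENNReal.ofReal_eq_zero, not_le]; positivity)
  obtain ⟨N, hN⟩ := sH_continuous hp g.continuous (show (0:ℝ) < δ/3 by positivity)
  refine ⟨N, fun n hn => ?_⟩
  have hfint : IntegrableOn f (Ioc (0:ℝ) 1) volume := hf.integrable hq1
  have hgint : IntegrableOn (⇑g) (Ioc (0:ℝ) 1) volume := g.continuous.integrableOn_Ioc
  have hdec : ∀ t : ℝ, shiftedHaar n f t - f t =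
      shiftedHaar n (fun r => f r - g r) t + ((shiftedHaar n (⇑g) t - g t) + (g t - f t)) := by
    intro t
    rw [sH_sub n hfint hgint t]
    abel
  have hsm1 : AEStronglyMeasurable (fun t => shiftedHaar n (fun r => f r - g r) t) μ :=
    (sH_stronglyMeasurable n _).aestronglyMeasurable
  have hsm2 : AEStronglyMeasurable (fun t => shiftedHaar n (⇑g) t - g t) μ :=
    ((sH_stronglyMeasurable n _).sub g.continuous.stronglyMeasurable).aestronglyMeasurable
  have hsm3 : AEStronglyMeasurable (fun t => g t - f t) μ :=
    (g.continuous.aestronglyMeasurable.sub hf.aestronglyMeasurable)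
  calc eLpNorm (fun t => shiftedHaar n f t - f t) (ENNReal.ofReal p) μ
      = eLpNorm ((fun t => shiftedHaar n (fun r => f r - g r) t)
          + ((fun t => shiftedHaar n (⇑g) t - g t) + fun t => g t - f t)) (ENNReal.ofReal p) μ := by
        apply eLpNorm_congr_ae
        apply ae_of_all
        intro t
        simpa using hdec t
    _ ≤ eLpNorm (fun t => shiftedHaar n (fun r => f r - g r) t) (ENNReal.ofReal p) μ
        + eLpNorm ((fun t => shiftedHaar n (⇑g) t - g t) + fun t => g t - f t)
            (ENNReal.ofReal p) μ := eLpNorm_add_le hsm1 (hsm2.add hsm3) hq1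
    _ ≤ eLpNorm (fun t => shiftedHaar n (fun r => f r - g r) t) (ENNReal.ofReal p) μ
        + (eLpNorm (fun t => shiftedHaar n (⇑g) t - g t) (ENNReal.ofReal p) μ
          + eLpNorm (fun t => g t - f t) (ENNReal.ofReal p) μ) :=
        add_le_add_right (eLpNorm_add_le hsm2 hsm3 hq1) _
    _ ≤ ENNReal.ofReal (δ/3) + (ENNReal.ofReal (δ/3) + ENNReal.ofReal (δ/3)) := by
        gcongr
        · refine (eLpNorm_sH_le hp n (hf.aestronglyMeasurable.sub
            g.continuous.aestronglyMeasurable)).trans ?_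
          exact hg
        · exact hN n hn
        · calc eLpNorm (fun t => g t - f t) (ENNReal.ofReal p) μ
              = eLpNorm (⇑g - f) (ENNReal.ofReal p) μ := rfl
            _ = eLpNorm (f - ⇑g) (ENNReal.ofReal p) μ := eLpNorm_sub_comm _ _ _ _
            _ ≤ ENNReal.ofReal (δ/3) := hg
    _ = ENNReal.ofReal δ := by
        rw [← ENNReal.ofReal_add (by positivity) (by positivity),
          ← ENNReal.ofReal_add (by positivity) (by positivity)]
        norm_num
        congr 1
        ring

end Aux

/-- Uniform convergence of the shifted Haar projections on bounded sets mapped by a compact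
linear operator `ι : 𝕏 → L^p([0,1];Y)`: for every `ε > 0` there exists `N` such that for all
`n ≥ N` and all `x` in the bounded set `𝒳`, `‖𝔥ⁿ_s(ιx) − ιx‖_{L^p([0,1];Y)} ≤ ε`. -/
theorem shiftedHaar_uniform_on_bounded
    {Y : Type*} [NormedAddCommGroup Y] [NormedSpace ℝ Y] [CompleteSpace Y]
    {𝕏 : Type*} [NormedAddCommGroup 𝕏] [NormedSpace ℝ 𝕏]
    (p : ℝ) (hp : 1 < p) [Fact (1 ≤ ENNReal.ofReal p)]
    (ι : 𝕏 →L[ℝ] Lp Y (ENNReal.ofReal p) (volume.restrict (Set.Ioc (0 : ℝ) 1)))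
    (hcompact : ∀ s : Set 𝕏, Bornology.IsBounded s → IsCompact (closure (⇑ι '' s)))
    (𝒳 : Set 𝕏) (hbdd : Bornology.IsBounded 𝒳) :
    ∀ ε > (0 : ℝ), ∃ N : ℕ, ∀ n ≥ N, ∀ x ∈ 𝒳,
      eLpNorm (fun t => shiftedHaar n (⇑(ι x)) t - (ι x : ℝ → Y) t) (ENNReal.ofReal p)
        (volume.restrict (Set.Ioc (0 : ℝ) 1)) ≤ ENNReal.ofReal ε := by
  intro ε hε
  have hK : IsCompact (closure (⇑ι '' 𝒳)) := hcompact 𝒳 hbdd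
  haveI : IsFiniteMeasure (volume.restrict (Ioc (0:ℝ) 1)) :=
    ⟨by rw [Measure.restrict_apply_univ, Real.volume_Ioc]; simp⟩
  have hq1 : (1:ℝ≥0∞) ≤ ENNReal.ofReal p := ENNReal.one_le_ofReal.2 hp.le
  -- totally bounded image: a finite ε/3-net
  obtain ⟨T, hTfin, hTcov⟩ := Metric.totallyBounded_iff.1 hK.totallyBounded (ε/3) (by positivity)
  -- choose N for each center
  have hch : ∀ g : Lp Y (ENNReal.ofReal p) (volume.restrict (Ioc (0:ℝ) 1)), ∃ N : ℕ, ∀ n ≥ N,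
      eLpNorm (fun t => shiftedHaar n (⇑g) t - g t) (ENNReal.ofReal p) (volume.restrict (Ioc (0:ℝ) 1)) ≤
        ENNReal.ofReal (ε/3) :=
    fun g => sH_memLp hp (Lp.memLp g) (by positivity)
  choose Nf hNf using hch
  refine ⟨hTfin.toFinset.sup Nf, fun n hn x hx => ?_⟩
  have hxK : (ι x : Lp Y (ENNReal.ofReal p) (volume.restrict (Ioc (0:ℝ) 1))) ∈ closure (⇑ι '' 𝒳) :=
    subset_closure (mem_image_of_mem _ hx)
  obtain ⟨g, hgT, hg⟩ := mem_iUnion₂.1 (hTcov hxK)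
  rw [Metric.mem_ball, dist_eq_norm] at hg
  have hnN : Nf g ≤ n := le_trans (Finset.le_sup (hTfin.mem_toFinset.2 hgT)) hn
  -- eLpNorm bound for the difference of representatives
  have hA : eLpNorm (fun t => (ι x : ℝ → Y) t - (g : ℝ → Y) t) (ENNReal.ofReal p) (volume.restrict (Ioc (0:ℝ) 1)) ≤
      ENNReal.ofReal (ε/3) := by
    have hae : (⇑(ι x - g) : ℝ → Y) =ᵐ[volume.restrict (Ioc (0:ℝ) 1)] fun t => (ι x : ℝ → Y) t - (g : ℝ → Y) t :=
      Lp.coeFn_sub (ι x) g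
    rw [← eLpNorm_congr_ae hae]
    rw [ENNReal.le_ofReal_iff_toReal_le (Lp.eLpNorm_ne_top _) (by positivity)]
    rw [← Lp.norm_def]
    exact hg.le
  -- integrability of representatives
  have hint1 : IntegrableOn (⇑(ι x) : ℝ → Y) (Ioc (0:ℝ) 1) volume :=
    (Lp.memLp (ι x)).integrable hq1
  have hint2 : IntegrableOn (⇑g : ℝ → Y) (Ioc (0:ℝ) 1) volume :=
    (Lp.memLp g).integrable hq1
  have hdec : ∀ t : ℝ, shiftedHaar n (⇑(ι x)) t - (ι x : ℝ → Y) t =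
      shiftedHaar n (fun r => (ι x : ℝ → Y) r - (g : ℝ → Y) r) t
        + ((shiftedHaar n (⇑g) t - (g : ℝ → Y) t) + ((g : ℝ → Y) t - (ι x : ℝ → Y) t)) := by
    intro t
    rw [sH_sub n hint1 hint2 t]
    abel
  have hsm1 : AEStronglyMeasurable
      (fun t => shiftedHaar n (fun r => (ι x : ℝ → Y) r - (g : ℝ → Y) r) t) (volume.restrict (Ioc (0:ℝ) 1)) :=
    (sH_stronglyMeasurable n _).aestronglyMeasurable
  have hsm2 : AEStronglyMeasurable (fun t => shiftedHaar n (⇑g) t - (g : ℝ → Y) t) (volume.restrict (Ioc (0:ℝ) 1)) :=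
    ((sH_stronglyMeasurable n _).aestronglyMeasurable.sub (Lp.aestronglyMeasurable g))
  have hsm3 : AEStronglyMeasurable (fun t => (g : ℝ → Y) t - (ι x : ℝ → Y) t) (volume.restrict (Ioc (0:ℝ) 1)) :=
    (Lp.aestronglyMeasurable g).sub (Lp.aestronglyMeasurable (ι x))
  calc eLpNorm (fun t => shiftedHaar n (⇑(ι x)) t - (ι x : ℝ → Y) t) (ENNReal.ofReal p) (volume.restrict (Ioc (0:ℝ) 1))
      = eLpNorm ((fun t => shiftedHaar n (fun r => (ι x : ℝ → Y) r - (g : ℝ → Y) r) t)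
          + ((fun t => shiftedHaar n (⇑g) t - (g : ℝ → Y) t)
            + fun t => (g : ℝ → Y) t - (ι x : ℝ → Y) t)) (ENNReal.ofReal p) (volume.restrict (Ioc (0:ℝ) 1)) := by
        apply eLpNorm_congr_ae
        apply ae_of_all
        intro t
        simpa using hdec t
    _ ≤ eLpNorm (fun t => shiftedHaar n (fun r => (ι x : ℝ → Y) r - (g : ℝ → Y) r) t)
          (ENNReal.ofReal p) (volume.restrict (Ioc (0:ℝ) 1))
        + eLpNorm ((fun t => shiftedHaar n (⇑g) t - (g : ℝ → Y) t)
            + fun t => (g : ℝ → Y) t - (ι x : ℝ → Y) t) (ENNReal.ofReal p) (volume.restrict (Ioc (0:ℝ) 1)) :=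
        eLpNorm_add_le hsm1 (hsm2.add hsm3) hq1
    _ ≤ eLpNorm (fun t => shiftedHaar n (fun r => (ι x : ℝ → Y) r - (g : ℝ → Y) r) t)
          (ENNReal.ofReal p) (volume.restrict (Ioc (0:ℝ) 1))
        + (eLpNorm (fun t => shiftedHaar n (⇑g) t - (g : ℝ → Y) t) (ENNReal.ofReal p) (volume.restrict (Ioc (0:ℝ) 1))
          + eLpNorm (fun t => (g : ℝ → Y) t - (ι x : ℝ → Y) t) (ENNReal.ofReal p) (volume.restrict (Ioc (0:ℝ) 1))) :=
        add_le_add_right (eLpNorm_add_le hsm2 hsm3 hq1) _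
    _ ≤ ENNReal.ofReal (ε/3) + (ENNReal.ofReal (ε/3) + ENNReal.ofReal (ε/3)) := by
        gcongr
        · exact (eLpNorm_sH_le hp n ((Lp.aestronglyMeasurable (ι x)).sub
            (Lp.aestronglyMeasurable g))).trans hA
        · exact hNf g n hnN
        · calc eLpNorm (fun t => (g : ℝ → Y) t - (ι x : ℝ → Y) t) (ENNReal.ofReal p) (volume.restrict (Ioc (0:ℝ) 1))
              = eLpNorm ((g : ℝ → Y) - (ι x : ℝ → Y)) (ENNReal.ofReal p) (volume.restrict (Ioc (0:ℝ) 1)) := rfl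
            _ = eLpNorm ((ι x : ℝ → Y) - (g : ℝ → Y)) (ENNReal.ofReal p) (volume.restrict (Ioc (0:ℝ) 1)) :=
                eLpNorm_sub_comm _ _ _ _
            _ ≤ ENNReal.ofReal (ε/3) := hA
    _ = ENNReal.ofReal ε := by
        rw [← ENNReal.ofReal_add (by positivity) (by positivity),
          ← ENNReal.ofReal_add (by positivity) (by positivity)]
        congr 1
        ring
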